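/- (Negative association of pointwise conditionals) Let Y be a DPP with kernel K, A, B disjoint subsets with ℙ(A ⊆ Y, B ∩ Y = ∅) > 0, and k ≠ l two points outside A ∪ B. If ℙ(A ∪ {l} ⊆ Y, B ∩ Y = ∅) > 0, then ℙ(k ∈ Y | A ∪ {l} ⊆ Y, B ∩ Y = ∅) ≤ ℙ(k ∈ Y | A ⊆ Y, B ∩ Y = ∅). -/

import Mathlib

/-- The principal submatrix of `K` indexed by a finite subset `A`. -/
noncomputable def subMat {N : ℕ} (K : Matrix (Fin N) (Fin N) ℝ) (A : Finset (Fin N)) :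
    Matrix A A ℝ :=
  K.submatrix (fun i : A => (i : Fin N)) (fun j : A => (j : Fin N))

/-- `ℙ(A ⊆ Y, B ∩ Y = ∅)` for a point process with distribution `P`. -/
noncomputable def jointProb {N : ℕ} (P : Finset (Fin N) → ℝ) (A B : Finset (Fin N)) : ℝ :=
  ∑ C ∈ Finset.univ.filter (fun C => A ⊆ C ∧ Disjoint B C), P C

/-! ### Auxiliary machinery -/

/-- Equiv between a disjoint union of finsets and the sum of subtypes. -/
def finUnionEquiv {N : ℕ} (U S : Finset (Fin N)) (h : Disjoint U S) :
    ((U ∪ S : Finset (Fin N)) : Type) ≃ (↥U ⊕ ↥S) where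
  toFun x := if hx : (x : Fin N) ∈ U then Sum.inl ⟨x, hx⟩ else
    Sum.inr ⟨x, (Finset.mem_union.1 x.2).resolve_left hx⟩
  invFun := Sum.elim (fun u => ⟨u, Finset.mem_union_left _ u.2⟩)
    (fun s => ⟨s, Finset.mem_union_right _ s.2⟩)
  left_inv x := by by_cases hx : (x : Fin N) ∈ U <;> simp [hx]
  right_inv z := by
    rcases z with u | s
    · simp [u.2]
    · have hs : (s : Fin N) ∉ U := fun hc => (Finset.disjoint_left.1 h hc) s.2
      simp [hs]

lemma det_subMat_union {N : ℕ} {γ : Type} [Fintype γ] [DecidableEq γ]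
    (M : Matrix (Fin N) (Fin N) ℝ) (U S : Finset (Fin N)) (h : Disjoint U S) (e : γ ≃ ↥S) :
    (subMat M (U ∪ S)).det =
      (Matrix.fromBlocks (subMat M U)
        (fun (i : ↥U) (j : γ) => M i (e j))
        (fun (i : γ) (j : ↥U) => M (e i) j)
        (fun (i j : γ) => M (e i) (e j))).det := by
  rw [← Matrix.det_reindex_self
    ((finUnionEquiv U S h).trans (Equiv.sumCongr (Equiv.refl _) e.symm)) (subMat M (U ∪ S))]
  congr 1
  ext i j
  rcases i with i | i <;> rcases j with j | j <;> rfl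

def singletonEquiv {N : ℕ} (x : Fin N) : (Fin 1) ≃ ↥({x} : Finset (Fin N)) :=
  ⟨fun _ => ⟨x, Finset.mem_singleton_self x⟩, fun _ => 0,
   fun _ => Subsingleton.elim _ _, fun s => Subtype.ext (Finset.mem_singleton.1 s.2).symm⟩

def pairEquiv {N : ℕ} (x y : Fin N) (hxy : x ≠ y) : (Fin 2) ≃ ↥({x, y} : Finset (Fin N)) :=
  ⟨![⟨x, by simp⟩, ⟨y, by simp⟩], fun s => if (s : Fin N) = x then 0 else 1,
   by intro i; fin_cases i <;> simp [hxy.symm],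
   by intro s; rcases Finset.mem_insert.1 s.2 with h | h
      · simp [h]; exact Subtype.ext h.symm
      · have h' := Finset.mem_singleton.1 h
        have hne : (s : Fin N) ≠ x := by rw [h']; exact hxy.symm
        simp [hne]; exact Subtype.ext h'.symm⟩

/-- Schur complement entry. -/
noncomputable def sc {N : ℕ} (M : Matrix (Fin N) (Fin N) ℝ) (U : Finset (Fin N)) (x y : Fin N) : ℝ :=
  M x y - ∑ j : ↥U, (∑ i : ↥U, M x i * (subMat M U)⁻¹ i j) * M j y

lemma det_union_one {N : ℕ} (M : Matrix (Fin N) (Fin N) ℝ) (U : Finset (Fin N)) (x : Fin N)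
    (hx : x ∉ U) (hd : (subMat M U).det ≠ 0) :
    (subMat M (insert x U)).det = (subMat M U).det * sc M U x x := by
  have hxU : Disjoint U {x} := Finset.disjoint_singleton_right.2 hx
  have hins : insert x U = U ∪ {x} := by ext a; simp [or_comm]
  haveI : Invertible (subMat M U) := (subMat M U).invertibleOfIsUnitDet (isUnit_iff_ne_zero.2 hd)
  rw [hins, det_subMat_union M U {x} hxU (singletonEquiv x)]
  erw [Matrix.det_fromBlocks₁₁]
  congr 1
  rw [Matrix.det_fin_one]
  simp only [Matrix.sub_apply, Matrix.mul_apply, Matrix.invOf_eq_nonsing_inv]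
  rfl

lemma det_union_two {N : ℕ} (M : Matrix (Fin N) (Fin N) ℝ) (U : Finset (Fin N)) (x y : Fin N)
    (hx : x ∉ U) (hy : y ∉ U) (hxy : x ≠ y) (hd : (subMat M U).det ≠ 0) :
    (subMat M (insert x (insert y U))).det =
      (subMat M U).det * (sc M U x x * sc M U y y - sc M U x y * sc M U y x) := by
  have hdisj : Disjoint U ({x, y} : Finset (Fin N)) := by
    simp [Finset.disjoint_insert_right, hx, hy, Finset.disjoint_singleton_right]
  have hins : insert x (insert y U) = U ∪ {x, y} := by ext a; simp
  haveI : Invertible (subMat M U) := (subMat M U).invertibleOfIsUnitDet (isUnit_iff_ne_zero.2 hd)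
  rw [hins, det_subMat_union M U {x, y} hdisj (pairEquiv x y hxy)]
  erw [Matrix.det_fromBlocks₁₁]
  congr 1
  rw [Matrix.det_fin_two]
  simp only [Matrix.sub_apply, Matrix.mul_apply, Matrix.invOf_eq_nonsing_inv]
  rfl

lemma sc_symm {N : ℕ} (M : Matrix (Fin N) (Fin N) ℝ) (hM : ∀ i j, M i j = M j i)
    (U : Finset (Fin N)) (x y : Fin N) : sc M U x y = sc M U y x := by
  have hsub : (subMat M U).transpose = subMat M U := by
    ext i j; exact hM j i
  have hinv : ∀ i j : ↥U, (subMat M U)⁻¹ i j = (subMat M U)⁻¹ j i := by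
    intro i j
    have h1 : ((subMat M U)⁻¹).transpose = (subMat M U)⁻¹ := by
      rw [Matrix.transpose_nonsing_inv, hsub]
    have h2 := congrFun (congrFun h1 j) i
    rwa [Matrix.transpose_apply] at h2
  unfold sc
  rw [hM x y]
  congr 1
  calc ∑ j : ↥U, (∑ i : ↥U, M x i * (subMat M U)⁻¹ i j) * M j y
      = ∑ j : ↥U, ∑ i : ↥U, M x i * (subMat M U)⁻¹ i j * M j y := by
        simp [Finset.sum_mul]
    _ = ∑ i : ↥U, ∑ j : ↥U, M x i * (subMat M U)⁻¹ i j * M j y := Finset.sum_comm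
    _ = ∑ i : ↥U, (∑ j : ↥U, M y j * (subMat M U)⁻¹ j i) * M i x := by
        refine Finset.sum_congr rfl fun i _ => ?_
        rw [Finset.sum_mul]
        refine Finset.sum_congr rfl fun j _ => ?_
        rw [hM x i, hM j y, hinv i j]; ring

lemma det_single_sub {N : ℕ} (M : Matrix (Fin N) (Fin N) ℝ) (U : Finset (Fin N)) (b : Fin N)
    (hb : b ∈ U) :
    (subMat (M - Matrix.single b b 1) U).det
      = (subMat M U).det - (subMat M (U.erase b)).det := by
  set b' : ↥U := ⟨b, hb⟩ with hb'
  set M' : Matrix (Fin N) (Fin N) ℝ :=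
    fun i j => if i = b then (if j = b then 1 else 0) else M i j with hM'
  have step1 : subMat (M - Matrix.single b b 1) U
      = (subMat M U).updateRow b' ((subMat M U) b' + (-1 : ℝ) • (Pi.single b' 1 : ↥U → ℝ)) := by
    ext i j
    by_cases hib : i = b'
    · subst hib
      simp only [Matrix.updateRow_self, subMat, Matrix.submatrix_apply, Matrix.sub_apply,
        Pi.add_apply, Pi.smul_apply, Pi.single_apply, smul_eq_mul]
      rw [Matrix.single]
      have : (j = b') ↔ ((b : Fin N) = j) := by
        constructor
        · intro h; rw [h]
        · intro h; exact Subtype.ext h.symm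
      simp [this, ite_and]
      by_cases hj : (b : Fin N) = (j : Fin N) <;> simp [hj, this] <;> ring
    · have hib' : (i : Fin N) ≠ b := fun hc => hib (Subtype.ext hc)
      rw [Matrix.updateRow_ne hib]
      simp [subMat, Matrix.single, Ne.symm hib', ite_and]
  have step2 : ((subMat M U).updateRow b' (Pi.single b' 1)).det
      = (subMat M (U.erase b)).det := by
    have h1 : (subMat M U).updateRow b' (Pi.single b' 1) = subMat M' U := by
      ext i j
      by_cases hib : i = b'
      · subst hib
        have : (b' : Fin N) = b := rfl
        simp only [Matrix.updateRow_self, Pi.single_apply, subMat, Matrix.submatrix_apply, hM']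
        have hiff : (j = b') ↔ ((j : Fin N) = b) := by
          constructor
          · intro h; rw [h]
          · intro h; exact Subtype.ext h
        simp [hiff, Matrix.submatrix, this]
      · have hib' : (i : Fin N) ≠ b := fun hc => hib (Subtype.ext hc)
        rw [Matrix.updateRow_ne hib]
        simp [subMat, hM', hib', Matrix.submatrix]
    rw [h1]
    have hU : U = (U.erase b) ∪ {b} := by
      ext a
      simp only [Finset.mem_union, Finset.mem_erase, Finset.mem_singleton]
      constructor
      · intro ha; by_cases hab : a = b
        · exact Or.inr hab
        · exact Or.inl ⟨hab, ha⟩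
      · rintro (⟨_, ha⟩ | rfl) <;> [exact ha; exact hb]
    have hdisj : Disjoint (U.erase b) ({b} : Finset (Fin N)) :=
      Finset.disjoint_singleton_right.2 (Finset.notMem_erase b U)
    have hdet := det_subMat_union M' (U.erase b) {b} hdisj (singletonEquiv b)
    rw [← hU] at hdet
    rw [hdet]
    have hC : (fun (i : Fin 1) (j : ↥(U.erase b)) => M' (singletonEquiv b i) j)
        = (0 : Matrix (Fin 1) (↥(U.erase b)) ℝ) := by
      funext i j
      have hj : (j : Fin N) ≠ b := Finset.ne_of_mem_erase j.2
      simp [hM', singletonEquiv, hj]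
    rw [hC]
    erw [Matrix.det_fromBlocks_zero₂₁]
    have hA : subMat M' (U.erase b) = subMat M (U.erase b) := by
      ext i j
      have hi : (i : Fin N) ≠ b := Finset.ne_of_mem_erase i.2
      simp [subMat, hM', hi, Matrix.submatrix]
    have hD : (fun (i j : Fin 1) => M' (singletonEquiv b i) (singletonEquiv b j))
        = (1 : Matrix (Fin 1) (Fin 1) ℝ) := by
      funext i j
      simp [hM', singletonEquiv, Matrix.one_apply, Subsingleton.elim i j]
    rw [hA, hD]
    simp
  rw [step1, Matrix.det_updateRow_add, Matrix.det_updateRow_smul, Matrix.updateRow_eq_self]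
  rw [step2]; ring

/-- The flipped kernel `K - I_B`. -/
noncomputable def flipK {N : ℕ} (K : Matrix (Fin N) (Fin N) ℝ) (B : Finset (Fin N)) :
    Matrix (Fin N) (Fin N) ℝ :=
  K - Matrix.diagonal (fun i => if i ∈ B then 1 else 0)

lemma jointProb_insert {N : ℕ} (P : Finset (Fin N) → ℝ) (S B : Finset (Fin N)) (b : Fin N) :
    jointProb P S (insert b B) = jointProb P S B - jointProb P (insert b S) B := by
  have key := Finset.sum_filter_add_sum_filter_not
    (Finset.univ.filter (fun C => S ⊆ C ∧ Disjoint B C)) (fun C => b ∈ C) P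
  rw [Finset.filter_filter, Finset.filter_filter] at key
  have h1 : Finset.univ.filter (fun C : Finset (Fin N) => (S ⊆ C ∧ Disjoint B C) ∧ b ∈ C)
      = Finset.univ.filter (fun C => insert b S ⊆ C ∧ Disjoint B C) := by
    apply Finset.filter_congr
    intro C _
    simp only [Finset.insert_subset_iff]
    tauto
  have h2 : Finset.univ.filter (fun C : Finset (Fin N) => (S ⊆ C ∧ Disjoint B C) ∧ ¬ b ∈ C)
      = Finset.univ.filter (fun C => S ⊆ C ∧ Disjoint (insert b B) C) := by
    apply Finset.filter_congr
    intro C _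
    simp only [Finset.disjoint_insert_left]
    constructor
    · rintro ⟨⟨h1', h2'⟩, h3'⟩; exact ⟨h1', h3', h2'⟩
    · rintro ⟨h1', h3', h2'⟩; exact ⟨⟨h1', h2'⟩, h3'⟩
  rw [h1, h2] at key
  unfold jointProb
  linarith

lemma jointProb_eq_det {N : ℕ} (K : Matrix (Fin N) (Fin N) ℝ) (P : Finset (Fin N) → ℝ)
    (hP : ∀ A : Finset (Fin N),
      ∑ B ∈ Finset.univ.filter (fun B => A ⊆ B), P B = (subMat K A).det) :
    ∀ (B S : Finset (Fin N)), Disjoint S B →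
      jointProb P S B = (-1 : ℝ) ^ B.card * (subMat (flipK K B) (S ∪ B)).det := by
  intro B
  induction B using Finset.induction_on with
  | empty =>
      intro S _
      have hflipK : flipK K ∅ = K := by
        unfold flipK
        simp
      rw [hflipK, Finset.union_empty]
      simp only [Finset.card_empty, pow_zero, one_mul]
      unfold jointProb
      rw [← hP S]
      apply Finset.sum_congr _ (fun _ _ => rfl)
      apply Finset.filter_congr
      intro C _
      simp
  | @insert b B₀ hbB₀ ih =>
      intro S hdisj
      have hbS : b ∉ S := fun hc => (Finset.disjoint_left.1 hdisj hc) (Finset.mem_insert_self b B₀)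
      have hSB₀ : Disjoint S B₀ := by
        apply Finset.disjoint_left.2
        intro a ha hc
        exact (Finset.disjoint_left.1 hdisj ha) (Finset.mem_insert_of_mem hc)
      have hbSB₀ : Disjoint (insert b S) B₀ := by
        rw [Finset.disjoint_insert_left]
        exact ⟨hbB₀, hSB₀⟩
      rw [jointProb_insert P S B₀ b, ih S hSB₀, ih (insert b S) hbSB₀]
      have hflipK : flipK K (insert b B₀) = flipK K B₀ - Matrix.single b b 1 := by
        unfold flipK
        ext i j
        by_cases hij : i = j
        · subst hij
          by_cases hib : i = b
          · subst hib
            simp [Matrix.single, hbB₀]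
          · simp [Matrix.single, Matrix.diagonal_apply, hib, Ne.symm hib]
        · have hne : ¬ (b = i ∧ b = j) := by rintro ⟨rfl, rfl⟩; exact hij rfl
          simp [Matrix.single, Matrix.diagonal_apply, hij, ite_and, hne]
          by_cases hbi : b = i <;> simp [hbi, hij]
      have hU : S ∪ insert b B₀ = insert b (S ∪ B₀) := Finset.union_insert b S B₀
      have hbU : b ∈ insert b (S ∪ B₀) := Finset.mem_insert_self _ _
      have herase : (insert b (S ∪ B₀)).erase b = S ∪ B₀ := by
        apply Finset.erase_insert
        simp only [Finset.mem_union]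
        rintro (h | h)
        · exact hbS h
        · exact hbB₀ h
      have hbU2 : insert b S ∪ B₀ = insert b (S ∪ B₀) := Finset.insert_union b S B₀
      rw [hflipK, hU, det_single_sub (flipK K B₀) (insert b (S ∪ B₀)) b hbU, herase, hbU2]
      rw [Finset.card_insert_of_notMem hbB₀]
      ring

/-- Negative association of pointwise conditionals of a DPP: conditioning on the extra
point `l` being in `Y` can only decrease the conditional probability that `k ∈ Y`. -/
theorem dpp_conditional_antitone_in_A {N : ℕ} (K : Matrix (Fin N) (Fin N) ℝ)
    (hK : K.PosSemidef) (hIK : ((1 : Matrix (Fin N) (Fin N) ℝ) - K).PosSemidef)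
    (P : Finset (Fin N) → ℝ) (hPnn : ∀ C, 0 ≤ P C)
    (hP : ∀ A : Finset (Fin N),
      ∑ B ∈ Finset.univ.filter (fun B => A ⊆ B), P B = (subMat K A).det)
    (A B : Finset (Fin N)) (hAB : Disjoint A B)
    (k l : Fin N) (hkl : k ≠ l) (hk : k ∉ A ∪ B) (hl : l ∉ A ∪ B)
    (hpos : 0 < jointProb P A B) (hposl : 0 < jointProb P (insert l A) B) :
    jointProb P (insert k (insert l A)) B / jointProb P (insert l A) B ≤
      jointProb P (insert k A) B / jointProb P A B := by
  set U : Finset (Fin N) := A ∪ B with hUdef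
  set M : Matrix (Fin N) (Fin N) ℝ := flipK K B with hMdef
  set s : ℝ := (-1 : ℝ) ^ B.card with hsdef
  have hkU : k ∉ U := hk
  have hlU : l ∉ U := hl
  have hkB : k ∉ B := fun h => hk (Finset.mem_union_right A h)
  have hlB : l ∉ B := fun h => hl (Finset.mem_union_right A h)
  have hkA : k ∉ A := fun h => hk (Finset.mem_union_left B h)
  have hlA : l ∉ A := fun h => hl (Finset.mem_union_left B h)
  -- symmetry of M
  have hMsym : ∀ i j, M i j = M j i := by
    intro i j
    have hKs : K i j = K j i := by
      have := hK.1.apply j i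
      simpa using this
    simp only [hMdef, flipK, Matrix.sub_apply, Matrix.diagonal_apply, hKs]
    by_cases hij : i = j
    · subst hij; simp
    · simp [hij, Ne.symm hij]
  -- express all joint probabilities as determinants
  have hid := jointProb_eq_det K P hP B
  have hA : jointProb P A B = s * (subMat M U).det := hid A hAB
  have hdisj_l : Disjoint (insert l A) B := by
    rw [Finset.disjoint_insert_left]; exact ⟨hlB, hAB⟩
  have hdisj_k : Disjoint (insert k A) B := by
    rw [Finset.disjoint_insert_left]; exact ⟨hkB, hAB⟩
  have hdisj_kl : Disjoint (insert k (insert l A)) B := by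
    rw [Finset.disjoint_insert_left]; exact ⟨hkB, hdisj_l⟩
  have hUl : insert l A ∪ B = insert l U := Finset.insert_union l A B
  have hUk : insert k A ∪ B = insert k U := Finset.insert_union k A B
  have hUkl : insert k (insert l A) ∪ B = insert k (insert l U) := by
    rw [Finset.insert_union, Finset.insert_union]
  have hL : jointProb P (insert l A) B = s * (subMat M (insert l U)).det := by
    rw [hid (insert l A) hdisj_l, hUl]
  have hKk : jointProb P (insert k A) B = s * (subMat M (insert k U)).det := by
    rw [hid (insert k A) hdisj_k, hUk]
  have hKL : jointProb P (insert k (insert l A)) B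
      = s * (subMat M (insert k (insert l U))).det := by
    rw [hid _ hdisj_kl, hUkl]
  -- d ≠ 0
  have hd : (subMat M U).det ≠ 0 := by
    intro h0
    rw [hA, h0, mul_zero] at hpos
    exact lt_irrefl 0 hpos
  -- Schur complement identities
  have e1 : (subMat M (insert k U)).det = (subMat M U).det * sc M U k k :=
    det_union_one M U k hkU hd
  have e2 : (subMat M (insert l U)).det = (subMat M U).det * sc M U l l :=
    det_union_one M U l hlU hd
  have e3 : (subMat M (insert k (insert l U))).det
      = (subMat M U).det * (sc M U k k * sc M U l l - sc M U k l * sc M U l k) :=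
    det_union_two M U k l hkU hlU hkl hd
  have hscsym : sc M U k l = sc M U l k := sc_symm M hMsym U k l
  -- reduce to cross-multiplied inequality
  rw [div_le_div_iff₀ hposl hpos]
  rw [hA, hL, hKk, hKL, e1, e2, e3]
  have hs2 : s * s = 1 := by
    rcases neg_one_pow_eq_or ℝ B.card with h | h <;> rw [hsdef, h] <;> norm_num
  set d : ℝ := (subMat M U).det
  set cxx : ℝ := sc M U k k
  set cyy : ℝ := sc M U l l
  set cxy : ℝ := sc M U k l
  rw [hscsym] at *
  set cyx : ℝ := sc M U l k
  have key : d * d * (cxx * cyy - cyx * cyx) ≤ d * d * (cxx * cyy) := by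
    nlinarith [sq_nonneg (d * cyx)]
  calc s * (d * (cxx * cyy - cyx * cyx)) * (s * d)
      = (s * s) * (d * d * (cxx * cyy - cyx * cyx)) := by ring
    _ = d * d * (cxx * cyy - cyx * cyx) := by rw [hs2]; ring
    _ ≤ d * d * (cxx * cyy) := key
    _ = (s * s) * (d * d * (cxx * cyy)) := by rw [hs2]; ring
    _ = s * (d * cxx) * (s * (d * cyy)) := by ring
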